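/- Let K be a compact Hausdorff space and κ a cardinal. If there exists a linear isometry T : C(βℕ∖ℕ, ℝ) →ₗᵢ C(K, ℝ) such that for every g ≠ 0 the range of T g has cardinality κ (Cardinal.mk ↥(Set.range (T g)) = κ), then κ = Cardinal.continuum. -/

import Mathlib

open scoped ENNReal

/-- The remainder `βℕ∖ℕ` of the Stone–Čech compactification of `ℕ`: the set of nonprincipal
ultrafilters on `ℕ`, as a subspace of `Ultrafilter ℕ`. -/
def betaNRemainder : Set (Ultrafilter ℕ) := (Set.range (pure : ℕ → Ultrafilter ℕ))ᶜ

lemma isOpen_range_pure : IsOpen (Set.range (pure : ℕ → Ultrafilter ℕ)) := by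
  have h : Set.range (pure : ℕ → Ultrafilter ℕ)
      = ⋃ n : ℕ, {u : Ultrafilter ℕ | ({n} : Set ℕ) ∈ u} := by
    ext u
    simp only [Set.mem_range, Set.mem_iUnion, Set.mem_setOf_eq]
    constructor
    · rintro ⟨n, rfl⟩
      exact ⟨n, by simp⟩
    · rintro ⟨n, hn⟩
      obtain ⟨x, hx, rfl⟩ := Ultrafilter.eq_pure_of_finite_mem (Set.finite_singleton n) hn
      exact ⟨x, rfl⟩
  rw [h]
  exact isOpen_iUnion fun n => ultrafilter_isOpen_basic _

instance : CompactSpace ↥betaNRemainder := by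
  rw [← isCompact_iff_compactSpace]
  exact isOpen_range_pure.isClosed_compl.isCompact

open Set Filter


noncomputable def qfun : ℕ → Set.Icc (0:ℝ) 1 := fun n =>
  Set.projIcc 0 1 zero_le_one ((n.unpair.2 : ℝ) / 2 ^ n.unpair.1)

def Aset (r : ℝ) : Set ℕ := Set.range (fun k => Nat.pair k ⌊r * 2 ^ k⌋₊)

lemma Aset_infinite (r : ℝ) : (Aset r).Infinite :=
  Set.infinite_range_of_injective (fun a b hab => by
    have := congrArg (fun n => n.unpair.1) hab
    simpa [Nat.unpair_pair] using this)

lemma qfun_val {r : ℝ} (hr : r ∈ Set.Ioo (0:ℝ) 1) (k : ℕ) :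
    ((qfun (Nat.pair k ⌊r * 2 ^ k⌋₊) : ℝ)) = (⌊r * 2 ^ k⌋₊ : ℝ) / 2 ^ k := by
  have h2 : (0:ℝ) < 2 ^ k := by positivity
  have h0 : (0:ℝ) ≤ (⌊r * 2 ^ k⌋₊ : ℝ) / 2 ^ k := by positivity
  have h1 : (⌊r * 2 ^ k⌋₊ : ℝ) / 2 ^ k ≤ 1 := by
    rw [div_le_one h2]
    calc (⌊r * 2 ^ k⌋₊ : ℝ) ≤ r * 2 ^ k := Nat.floor_le (by nlinarith [hr.1])
    _ ≤ 1 * 2 ^ k := by have := hr.2; nlinarith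
    _ = 2 ^ k := one_mul _
  simp [qfun, Nat.unpair_pair, Set.coe_projIcc, max_eq_right, min_eq_right h1, h0]

lemma qfun_close {r : ℝ} (hr : r ∈ Set.Ioo (0:ℝ) 1) (k : ℕ) :
    |((qfun (Nat.pair k ⌊r * 2 ^ k⌋₊) : ℝ)) - r| ≤ 1 / 2 ^ k := by
  rw [qfun_val hr]
  have h2 : (0:ℝ) < 2 ^ k := by positivity
  have hle : (⌊r * 2 ^ k⌋₊ : ℝ) ≤ r * 2 ^ k := Nat.floor_le (by nlinarith [hr.1])
  have hgt : r * 2 ^ k - 1 < (⌊r * 2 ^ k⌋₊ : ℝ) := by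
    have := Nat.lt_floor_add_one (r * 2 ^ k)
    linarith
  have e1 : (⌊r * 2 ^ k⌋₊ : ℝ) / 2 ^ k ≤ r := by rw [div_le_iff₀ h2]; nlinarith
  have e2 : r ≤ 1 / 2 ^ k + (⌊r * 2 ^ k⌋₊ : ℝ) / 2 ^ k := by
    rw [← add_div, le_div_iff₀ h2]
    nlinarith
  rw [abs_le]
  constructor <;> linarith

lemma nonprincipal_cofinite {u : Ultrafilter ℕ} (hu : u ∈ betaNRemainder)
    {s : Set ℕ} (hs : s.Finite) : s ∉ u := fun hmem => by
  obtain ⟨x, -, rfl⟩ := Ultrafilter.eq_pure_of_finite_mem hs hmem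
  exact hu ⟨x, rfl⟩

lemma qfun_tendsto {r : ℝ} (hr : r ∈ Set.Ioo (0:ℝ) 1) {u : Ultrafilter ℕ}
    (hu : u ∈ betaNRemainder) (hA : Aset r ∈ u) :
    Filter.Tendsto (fun n => ((qfun n : ℝ))) u (nhds r) := by
  rw [Metric.tendsto_nhds]
  intro ε hε
  obtain ⟨N, hN⟩ : ∃ N : ℕ, 1 / 2 ^ N < ε := by
    obtain ⟨N, hN⟩ := pow_unbounded_of_one_lt (1/ε) (by norm_num : (1:ℝ) < 2)
    exact ⟨N, by rw [div_lt_iff₀ (by positivity)]; rw [div_lt_iff₀ hε] at hN; linarith⟩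
  have hlift : ∀ k : ℕ, N ≤ k → ∀ n, n = Nat.pair k ⌊r * 2 ^ k⌋₊ → dist ((qfun n : ℝ)) r < ε := by
    rintro k hk n rfl
    rw [Real.dist_eq]
    calc |((qfun (Nat.pair k ⌊r * 2 ^ k⌋₊) : ℝ)) - r| ≤ 1 / 2 ^ k := qfun_close hr k
    _ ≤ 1 / 2 ^ N := by
      apply div_le_div_of_nonneg_left one_pos.le (by positivity)
      exact pow_le_pow_right₀ (by norm_num) hk
    _ < ε := hN
  have hFfin : (((fun k => Nat.pair k ⌊r * 2 ^ k⌋₊) '' (Set.Iio N))).Finite :=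
    (Set.finite_Iio N).image _
  have hmem : (Aset r) \ ((fun k => Nat.pair k ⌊r * 2 ^ k⌋₊) '' (Set.Iio N)) ∈ u := by
    apply Ultrafilter.diff_mem_iff _ |>.mpr ⟨hA, nonprincipal_cofinite hu hFfin⟩
  apply Filter.mem_of_superset hmem
  rintro n ⟨⟨k, rfl⟩, hnF⟩
  have hk : N ≤ k := by
    by_contra hlt
    exact hnF ⟨k, Set.mem_Iio.mpr (by omega), rfl⟩
  exact hlift k hk _ rfl

noncomputable def Gmap : Ultrafilter ℕ → Set.Icc (0:ℝ) 1 := Ultrafilter.extend qfun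

lemma Gmap_continuous : Continuous Gmap := continuous_ultrafilter_extend qfun

lemma Gmap_eq {r : ℝ} (hr : r ∈ Set.Ioo (0:ℝ) 1) {u : Ultrafilter ℕ}
    (hu : u ∈ betaNRemainder) (hA : Aset r ∈ u) :
    (Gmap u : ℝ) = r := by
  have h : Gmap u = ⟨r, hr.1.le, hr.2.le⟩ := by
    rw [Gmap, ultrafilter_extend_eq_iff, Ultrafilter.coe_map]
    exact tendsto_subtype_rng.mpr (qfun_tendsto hr hu hA)
  rw [h]

lemma isClopen_basic (A : Set ℕ) : IsClopen {u : Ultrafilter ℕ | A ∈ u} := by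
  constructor
  · rw [← isOpen_compl_iff]
    have : {u : Ultrafilter ℕ | A ∈ u}ᶜ = {u : Ultrafilter ℕ | Aᶜ ∈ u} := by
      ext u
      simp [Ultrafilter.compl_mem_iff_notMem]
    rw [this]
    exact ultrafilter_isOpen_basic _
  · exact ultrafilter_isOpen_basic _

open scoped Classical in
noncomputable def chi (A : Set ℕ) : C(↥betaNRemainder, ℝ) where
  toFun := fun u => if A ∈ u.1 then (1:ℝ) else 0
  continuous_toFun := by
    have hcl : IsClopen {u : ↥betaNRemainder | A ∈ u.1} :=
      (isClopen_basic A).preimage continuous_subtype_val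
    exact continuous_if (fun a ha => by rw [hcl.frontier_eq] at ha; exact ha.elim)
      continuous_const.continuousOn continuous_const.continuousOn

set_option maxHeartbeats 1000000

/-- If `K` is a compact Hausdorff space and there is a linear isometry
`T : C(βℕ∖ℕ, ℝ) →ₗᵢ C(K, ℝ)` such that the range of `T g` has cardinality `κ` for every
`g ≠ 0`, then `κ` is the continuum. -/
theorem stmt12 {K : Type*} [TopologicalSpace K] [CompactSpace K] [T2Space K] (κ : Cardinal)
    (h : ∃ T : C(↥betaNRemainder, ℝ) →ₗᵢ[ℝ] C(K, ℝ),
      ∀ g : C(↥betaNRemainder, ℝ), g ≠ 0 →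
        Cardinal.mk ↥(Set.range (T g)) = κ) :
    κ = Cardinal.continuum := by
  classical
  obtain ⟨T, hT⟩ := h
  set g0 : C(↥betaNRemainder, ℝ) :=
    ⟨fun u => (Gmap u.1 : ℝ),
      continuous_subtype_val.comp (Gmap_continuous.comp continuous_subtype_val)⟩ with hg0def
  have key : ∀ r ∈ Set.Ioo (0:ℝ) 1, ∃ x : K, |(T g0) x| = r := by
    intro r hr
    have hNB : (Filter.cofinite ⊓ Filter.principal (Aset r)).NeBot :=
      (Aset_infinite r).cofinite_inf_principal_neBot
    obtain ⟨u, hu⟩ := Ultrafilter.exists_le (Filter.cofinite ⊓ Filter.principal (Aset r))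
    have huA : Aset r ∈ u := le_principal_iff.mp (le_inf_iff.mp hu).2
    have huR : u ∈ betaNRemainder := by
      rintro ⟨x, rfl⟩
      have : ({x}ᶜ : Set ℕ) ∈ (pure x : Ultrafilter ℕ) :=
        (le_inf_iff.mp hu).1 ((Set.finite_singleton x).compl_mem_cofinite)
      simp at this
    set χ := chi (Aset r) with hχdef
    have hχ1 : ∀ v : ↥betaNRemainder, Aset r ∈ v.1 → χ v = 1 := by
      intro v hv; simp [hχdef, chi, hv]
    have hχ0 : ∀ v : ↥betaNRemainder, Aset r ∉ v.1 → χ v = 0 := by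
      intro v hv; simp [hχdef, chi, hv]
    have hg0v : ∀ v : ↥betaNRemainder, Aset r ∈ v.1 → g0 v = r := by
      intro v hv
      exact Gmap_eq hr v.2 hv
    have hg0b : ∀ v : ↥betaNRemainder, |g0 v| ≤ 1 := by
      intro v
      have h1 := (Gmap v.1).2.1
      have h2 := (Gmap v.1).2.2
      rw [abs_le]
      constructor <;> simp only [hg0def, ContinuousMap.coe_mk] <;> linarith
    have hbound : ∀ t : ℝ, |t| ≤ 1 → ‖g0 + (t - r) • χ‖ ≤ 1 := by
      intro t ht
      apply (ContinuousMap.norm_le _ zero_le_one).mpr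
      intro v
      rw [ContinuousMap.add_apply, ContinuousMap.smul_apply, smul_eq_mul, Real.norm_eq_abs]
      by_cases hv : Aset r ∈ v.1
      · rw [hg0v v hv, hχ1 v hv, mul_one]
        simpa using ht
      · rw [hχ0 v hv, mul_zero, add_zero]
        exact hg0b v
    have hχnorm : ‖χ‖ = 1 := by
      apply le_antisymm
      · apply (ContinuousMap.norm_le _ zero_le_one).mpr
        intro v
        rw [Real.norm_eq_abs]
        by_cases hv : Aset r ∈ v.1
        · rw [hχ1 v hv]; norm_num
        · rw [hχ0 v hv]; norm_num
      · calc (1:ℝ) = ‖χ ⟨u, huR⟩‖ := by rw [hχ1 _ huA, norm_one]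
        _ ≤ ‖χ‖ := χ.norm_coe_le_norm _
    have hTχ : ‖T χ‖ = 1 := by rw [T.norm_map]; exact hχnorm
    have hKne : Nonempty K := by
      by_contra hK
      rw [not_nonempty_iff] at hK
      have h0 : T χ = 0 := ContinuousMap.ext fun x => (hK.false x).elim
      rw [h0, norm_zero] at hTχ
      norm_num at hTχ
    have hcont : Continuous (fun y : K => |(T χ) y|) := by continuity
    obtain ⟨x, -, hx⟩ := IsCompact.exists_isMaxOn (isCompact_univ (X := K)) Set.univ_nonempty
      hcont.continuousOn
    replace hx : ∀ y : K, |(T χ) y| ≤ |(T χ) x| := fun y => hx (Set.mem_univ y)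
    have hs : |(T χ) x| = 1 := by
      apply le_antisymm
      · rw [← hTχ, ← Real.norm_eq_abs]; exact (T χ).norm_coe_le_norm x
      · rw [← hTχ]
        apply (ContinuousMap.norm_le _ (abs_nonneg _)).mpr
        intro y
        rw [Real.norm_eq_abs]
        exact hx y
    set s := (T χ) x with hsdef
    have heval : ∀ t : ℝ, |t| ≤ 1 → |(T g0) x + (t - r) * s| ≤ 1 := by
      intro t ht
      calc |(T g0) x + (t - r) * s|
          = ‖(T (g0 + (t - r) • χ)) x‖ := by
            rw [map_add, map_smul]
            simp [Real.norm_eq_abs, hsdef]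
        _ ≤ ‖T (g0 + (t - r) • χ)‖ := (T (g0 + (t - r) • χ)).norm_coe_le_norm x
        _ ≤ 1 := by rw [T.norm_map]; exact hbound t ht
    have e1 := heval 1 (by norm_num)
    have e2 := heval (-1) (by norm_num)
    have hs2 : s = 1 ∨ s = -1 := (abs_eq zero_le_one).mp hs
    have ha : (T g0) x = r * s := by
      rcases hs2 with hss | hss <;>
        rw [hss] at e1 e2 ⊢ <;> rw [abs_le] at e1 e2 <;>
        linarith [e1.1, e1.2, e2.1, e2.2]
    exact ⟨x, by rw [ha, abs_mul, hsdef, hs, mul_one, abs_of_pos hr.1]⟩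
  have hg0ne : g0 ≠ 0 := by
    obtain ⟨x, hx⟩ := key (1/2) (by norm_num)
    intro h0
    rw [h0, map_zero] at hx
    simp at hx
  have hcard := hT g0 hg0ne
  rw [← hcard]
  apply le_antisymm
  · exact le_trans (Cardinal.mk_set_le _) (le_of_eq Cardinal.mk_real)
  · rw [← Cardinal.mk_Ioo_real (zero_lt_one (α := ℝ))]
    choose xf hxf using fun r : Set.Ioo (0:ℝ) 1 => key r r.2
    apply Cardinal.mk_le_of_injective (f := fun r : Set.Ioo (0:ℝ) 1 =>
      (⟨(T g0) (xf r), Set.mem_range_self _⟩ : ↥(Set.range (T g0))))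
    intro r1 r2 h12
    have hv : |(T g0) (xf r1)| = |(T g0) (xf r2)| := by
      have h13 : (T g0) (xf r1) = (T g0) (xf r2) := congrArg Subtype.val h12
      rw [h13]
    rw [hxf r1, hxf r2] at hv
    exact Subtype.ext hv
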